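/- Let G_1, ..., G_n be pairwise commuting invertible complex r×r matrices with G_1 ··· G_n = I, such that each G_j is upper-triangular with a single eigenvalue ρ_j. Let K_j = norm log G_j with unique eigenvalue μ_j, and set ξ = ∑_j μ_j. Then ξ is a nonnegative integer and ξ·I − ∑_j K_j = 0. -/

import Mathlib

open Complex Matrix Finset

namespace SNLaux

/-- If `C` lies in the span of its own sandwiches `M^a * C * M^b` with `a + b ≥ 1`,
and `M` is nilpotent, then `C = 0`. -/
lemma eq_zero_of_mem_span {A : Type*} [Ring A] [Algebra ℂ A] (M C : A) {m : ℕ}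
    (hM : M ^ m = 0)
    (hrel : C ∈ Submodule.span ℂ {x | ∃ a b : ℕ, 1 ≤ a + b ∧ x = M ^ a * C * M ^ b}) :
    C = 0 := by
  have hpow : ∀ {a : ℕ}, m ≤ a → M ^ a = 0 := by
    intro a ha
    rw [← Nat.sub_add_cancel ha, pow_add, hM, mul_zero]
  set S : ℕ → Submodule ℂ A := fun k =>
    Submodule.span ℂ {x | ∃ a b : ℕ, k ≤ a + b ∧ x = M ^ a * C * M ^ b} with hS
  have hmono : ∀ {k l : ℕ}, k ≤ l → S l ≤ S k := by
    intro k l h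
    apply Submodule.span_mono
    rintro x ⟨a, b, hab, rfl⟩
    exact ⟨a, b, le_trans h hab, rfl⟩
  have hmul : ∀ (j a b : ℕ) (x : A), x ∈ S j → M ^ a * x * M ^ b ∈ S (a + b + j) := by
    intro j a b x hx
    induction hx using Submodule.span_induction with
    | mem y hy =>
      obtain ⟨a', b', hab', rfl⟩ := hy
      refine Submodule.subset_span ⟨a + a', b' + b, by omega, ?_⟩
      rw [pow_add, pow_add]
      noncomm_ring
    | zero => simpa using Submodule.zero_mem _
    | add y z _ _ hy hz => simpa [mul_add, add_mul] using Submodule.add_mem _ hy hz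
    | smul t y _ hy =>
      have : M ^ a * (t • y) * M ^ b = t • (M ^ a * y * M ^ b) := by
        rw [mul_smul_comm, smul_mul_assoc]
      rw [this]; exact Submodule.smul_mem _ _ hy
  have hC : ∀ k : ℕ, C ∈ S k := by
    intro k
    induction k with
    | zero =>
      exact Submodule.subset_span ⟨0, 0, le_refl 0, by simp⟩
    | succ k ih =>
      have hle : Submodule.span ℂ {x | ∃ a b : ℕ, 1 ≤ a + b ∧ x = M ^ a * C * M ^ b}
          ≤ S (k + 1) := by
        rw [Submodule.span_le]
        rintro x ⟨a, b, hab, rfl⟩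
        exact hmono (by omega : k + 1 ≤ a + b + k) (hmul k a b C ih)
      exact hle hrel
  have hbot : S (m + m) ≤ ⊥ := by
    rw [Submodule.span_le]
    rintro x ⟨a, b, hab, rfl⟩
    have : M ^ a = 0 ∨ M ^ b = 0 := by
      rcases (by omega : m ≤ a ∨ m ≤ b) with h | h
      · exact Or.inl (hpow h)
      · exact Or.inr (hpow h)
    rcases this with h | h <;> simp [h]
  simpa using hbot (hC (m + m))

variable {r : ℕ}

lemma exp_eq_sum_of_pow_eq_zero {m : ℕ} {M : Matrix (Fin r) (Fin r) ℂ} (h : M ^ m = 0) :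
    NormedSpace.exp M = ∑ k ∈ Finset.range m, ((Nat.factorial k : ℕ) : ℂ)⁻¹ • M ^ k := by
  rw [NormedSpace.exp_eq_tsum ℂ]
  refine tsum_eq_sum ?_
  intro k hk
  have hm : m ≤ k := by simpa using hk
  have : M ^ k = 0 := by
    rw [← Nat.sub_add_cancel hm, pow_add, h, mul_zero]
  rw [this, smul_zero]

lemma commute_of_commute_exp {A M : Matrix (Fin r) (Fin r) ℂ} (hnil : IsNilpotent M)
    (h : Commute A (NormedSpace.exp M)) : Commute A M := by
  obtain ⟨m0, hm0⟩ := hnil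
  have hm : M ^ (m0 + 2) = 0 := by rw [pow_add, hm0, zero_mul]
  set m := m0 + 2 with hmdef
  set C := A * M - M * A with hCdef
  have hD : ∀ k : ℕ, A * M ^ k - M ^ k * A
      = ∑ i ∈ Finset.range k, M ^ i * C * M ^ (k - 1 - i) := by
    intro k
    induction k with
    | zero => simp
    | succ k ih =>
      have hstep : A * M ^ (k + 1) - M ^ (k + 1) * A
          = (A * M ^ k - M ^ k * A) * M + M ^ k * C := by
        rw [hCdef, pow_succ]; noncomm_ring
      rw [hstep, ih, Finset.sum_mul, Finset.sum_range_succ]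
      congr 1
      · apply Finset.sum_congr rfl
        intro i hi
        have hik : i < k := Finset.mem_range.mp hi
        rw [mul_assoc, ← pow_succ]
        congr 2
        omega
      · simp
  have hexp := exp_eq_sum_of_pow_eq_zero hm
  have h' : A * (∑ k ∈ Finset.range m, ((Nat.factorial k : ℕ) : ℂ)⁻¹ • M ^ k)
      = (∑ k ∈ Finset.range m, ((Nat.factorial k : ℕ) : ℂ)⁻¹ • M ^ k) * A := by
    rw [← hexp]; exact h.eq
  have hrel0 : ∑ k ∈ Finset.range m, ((Nat.factorial k : ℕ) : ℂ)⁻¹ • (A * M ^ k - M ^ k * A) = 0 := by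
    have : ∑ k ∈ Finset.range m, ((Nat.factorial k : ℕ) : ℂ)⁻¹ • (A * M ^ k - M ^ k * A)
        = A * (∑ k ∈ Finset.range m, ((Nat.factorial k : ℕ) : ℂ)⁻¹ • M ^ k)
          - (∑ k ∈ Finset.range m, ((Nat.factorial k : ℕ) : ℂ)⁻¹ • M ^ k) * A := by
      rw [Finset.mul_sum, Finset.sum_mul, ← Finset.sum_sub_distrib]
      apply Finset.sum_congr rfl
      intro k _
      rw [mul_smul_comm, smul_mul_assoc, smul_sub]
    rw [this, h', sub_self]
  have hsplit : ∑ k ∈ Finset.range m, ((Nat.factorial k : ℕ) : ℂ)⁻¹ • (A * M ^ k - M ^ k * A)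
      = C + ∑ k ∈ Finset.Ico 2 m, ((Nat.factorial k : ℕ) : ℂ)⁻¹ • (A * M ^ k - M ^ k * A) := by
    rw [Finset.range_eq_Ico, ← Finset.sum_Ico_consecutive _ (Nat.zero_le 2) (by omega : 2 ≤ m)]
    congr 1
    rw [← Finset.range_eq_Ico]
    rw [Finset.sum_range_succ, Finset.sum_range_one]
    simp [Nat.factorial, hCdef]
  have hrelC : C = -∑ k ∈ Finset.Ico 2 m, ((Nat.factorial k : ℕ) : ℂ)⁻¹ • (A * M ^ k - M ^ k * A) := by
    rw [hsplit] at hrel0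
    exact eq_neg_of_add_eq_zero_left hrel0
  have hmem' : -∑ k ∈ Finset.Ico 2 m, ((Nat.factorial k : ℕ) : ℂ)⁻¹ • (A * M ^ k - M ^ k * A)
      ∈ Submodule.span ℂ {x | ∃ a b : ℕ, 1 ≤ a + b ∧ x = M ^ a * C * M ^ b} := by
    apply Submodule.neg_mem
    apply Submodule.sum_mem
    intro k hk
    obtain ⟨hk2, hkm⟩ := Finset.mem_Ico.mp hk
    apply Submodule.smul_mem
    rw [hD k]
    apply Submodule.sum_mem
    intro i hi
    have hik : i < k := Finset.mem_range.mp hi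
    exact Submodule.subset_span ⟨i, k - 1 - i, by omega, rfl⟩
  have hmem : C ∈ Submodule.span ℂ {x | ∃ a b : ℕ, 1 ≤ a + b ∧ x = M ^ a * C * M ^ b} := by
    rwa [← hrelC] at hmem'
  have := eq_zero_of_mem_span M C hm hmem
  exact sub_eq_zero.mp this

lemma eq_zero_of_exp_eq_one {M : Matrix (Fin r) (Fin r) ℂ} (hnil : IsNilpotent M)
    (h : NormedSpace.exp M = 1) : M = 0 := by
  obtain ⟨m0, hm0⟩ := hnil
  have hm : M ^ (m0 + 2) = 0 := by rw [pow_add, hm0, zero_mul]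
  set m := m0 + 2 with hmdef
  have hexp := exp_eq_sum_of_pow_eq_zero hm
  rw [hexp] at h
  have hsplit : ∑ k ∈ Finset.range m, ((Nat.factorial k : ℕ) : ℂ)⁻¹ • M ^ k
      = 1 + (M + ∑ k ∈ Finset.Ico 2 m, ((Nat.factorial k : ℕ) : ℂ)⁻¹ • M ^ k) := by
    rw [Finset.range_eq_Ico, ← Finset.sum_Ico_consecutive _ (Nat.zero_le 2) (by omega : 2 ≤ m)]
    rw [← Finset.range_eq_Ico]
    rw [Finset.sum_range_succ, Finset.sum_range_one]
    simp [Nat.factorial, add_assoc]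
  rw [hsplit, add_eq_left] at h
  have hrelM : M = -∑ k ∈ Finset.Ico 2 m, ((Nat.factorial k : ℕ) : ℂ)⁻¹ • M ^ k :=
    eq_neg_of_add_eq_zero_left h
  have hmem' : -∑ k ∈ Finset.Ico 2 m, ((Nat.factorial k : ℕ) : ℂ)⁻¹ • M ^ k
      ∈ Submodule.span ℂ {x | ∃ a b : ℕ, 1 ≤ a + b ∧ x = M ^ a * M * M ^ b} := by
    apply Submodule.neg_mem
    apply Submodule.sum_mem
    intro k hk
    obtain ⟨hk2, hkm⟩ := Finset.mem_Ico.mp hk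
    apply Submodule.smul_mem
    refine Submodule.subset_span ⟨k - 1, 0, by omega, ?_⟩
    rw [pow_zero, mul_one, ← pow_succ, Nat.sub_add_cancel (by omega : 1 ≤ k)]
  have hmem : M ∈ Submodule.span ℂ {x | ∃ a b : ℕ, 1 ≤ a + b ∧ x = M ^ a * M * M ^ b} := by
    rwa [← hrelM] at hmem'
  exact eq_zero_of_mem_span M M hm hmem

lemma exp_smul_one (z : ℂ) :
    NormedSpace.exp (z • (1 : Matrix (Fin r) (Fin r) ℂ)) = Complex.exp z • 1 := by
  rw [Matrix.smul_one_eq_diagonal, Matrix.exp_diagonal]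
  have hfun : (NormedSpace.exp fun _ : Fin r => z) = fun _ : Fin r => Complex.exp z := by
    funext i
    rw [Pi.coe_exp, ← Complex.exp_eq_exp_ℂ]
  rw [hfun, Matrix.smul_one_eq_diagonal]

lemma list_prod_exp {n : ℕ} (A : Fin n → Matrix (Fin r) (Fin r) ℂ)
    (hA : ∀ j k, Commute (A j) (A k)) :
    (List.ofFn (fun j => NormedSpace.exp (A j))).prod = NormedSpace.exp (∑ j, A j) := by
  induction n with
  | zero => simp [NormedSpace.exp_zero]
  | succ n ih =>
    rw [List.ofFn_succ, List.prod_cons, Fin.sum_univ_succ,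
      Matrix.exp_add_of_commute (A 0) (∑ i : Fin n, A i.succ)
        (Commute.sum_right _ _ _ (fun (j : Fin n) _ => hA 0 j.succ))]
    rw [show (List.ofFn fun i : Fin n => NormedSpace.exp (A i.succ)).prod
        = NormedSpace.exp (∑ j : Fin n, A j.succ) from ih _ (fun j k => hA _ _)]

lemma pow_card_eq_zero {A : Matrix (Fin r) (Fin r) ℂ} {μ : ℂ}
    (hspec : spectrum ℂ A = {μ}) : (A - μ • 1) ^ r = 0 := by
  have hm : A.charpoly.Monic := A.charpoly_monic
  have hsp : A.charpoly.Splits := IsAlgClosed.splits _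
  have hdeg : A.charpoly.natDegree = r := by simpa using A.charpoly_natDegree_eq_dim
  have hroots : A.charpoly.roots = Multiset.replicate r μ := by
    apply Multiset.eq_replicate.mpr
    refine ⟨(Polynomial.splits_iff_card_roots.mp hsp).trans hdeg, ?_⟩
    intro z hz
    have hroot : A.charpoly.IsRoot z := (Polynomial.mem_roots'.mp hz).2
    have hdet : (z • (1 : Matrix (Fin r) (Fin r) ℂ) - A).det = 0 := by
      have h2 := RingHom.map_det (Polynomial.evalRingHom z) (charmatrix A)
      rw [RingHom.mapMatrix_apply] at h2
      have h3 : (charmatrix A).map (Polynomial.evalRingHom z)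
          = z • (1 : Matrix (Fin r) (Fin r) ℂ) - A := by
        ext i j
        by_cases hij : i = j
        · subst hij
          simp [charmatrix_apply_eq, Matrix.map_apply, Matrix.sub_apply, Matrix.smul_apply,
            Matrix.one_apply_eq]
        · simp [charmatrix_apply_ne _ _ _ hij, Matrix.map_apply, Matrix.sub_apply,
            Matrix.smul_apply, Matrix.one_apply_ne hij]
      rw [h3] at h2
      rw [← h2]
      simpa [Matrix.charpoly] using hroot
    have hunit : ¬ IsUnit (algebraMap ℂ (Matrix (Fin r) (Fin r) ℂ) z - A) := by
      rw [Matrix.isUnit_iff_isUnit_det, Algebra.algebraMap_eq_smul_one, hdet]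
      exact not_isUnit_zero
    have hzs : z ∈ spectrum ℂ A := spectrum.mem_iff.mpr hunit
    rw [hspec] at hzs
    exact hzs
  have hchar : A.charpoly = (Polynomial.X - Polynomial.C μ) ^ r := by
    have := hsp.eq_prod_roots_of_monic hm
    rw [hroots, Multiset.map_replicate, Multiset.prod_replicate] at this
    exact this
  have hCH := A.aeval_self_charpoly
  rw [hchar, map_pow] at hCH
  have : (Polynomial.aeval A) (Polynomial.X - Polynomial.C μ) = A - μ • 1 := by
    rw [map_sub, Polynomial.aeval_X, Polynomial.aeval_C, Algebra.algebraMap_eq_smul_one]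
  rwa [this] at hCH

lemma smul_one_eq_zero {a : ℂ} (hr : 0 < r)
    (h : IsNilpotent (a • (1 : Matrix (Fin r) (Fin r) ℂ))) : a = 0 := by
  obtain ⟨k, hk⟩ := h
  rw [smul_pow, one_pow] at hk
  have hent := congrFun (congrFun hk ⟨0, hr⟩) ⟨0, hr⟩
  have hak : a ^ k = 0 := by simpa using hent
  rcases Nat.eq_zero_or_pos k with h0 | hpos
  · subst h0; simp at hak
  · exact pow_eq_zero_iff (by omega) |>.mp hak

end SNLaux

open SNLaux

/-- For pairwise commuting invertible upper-triangular matrices `G j`, each with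
single eigenvalue `ρ j`, whose product is the identity, the sum `ξ` of the unique
eigenvalues `μ j` of the normalised logarithms `K j` is a nonnegative integer and
`ξ • 1 - ∑ K j = 0`. -/
theorem sum_normLog_of_product_one {n r : ℕ}
    (G K : Fin n → Matrix (Fin r) (Fin r) ℂ) (ρ μ : Fin n → ℂ)
    (hGunit : ∀ j, IsUnit (G j).det)
    (hGtri : ∀ j, (G j).BlockTriangular (id : Fin r → Fin r))
    (hGspec : ∀ j, spectrum ℂ (G j) = {ρ j})
    (hcomm : ∀ j k, G j * G k = G k * G j)
    (hprod : (List.ofFn G).prod = 1)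
    (hK : ∀ j, NormedSpace.exp (((2 * ↑Real.pi * Complex.I) : ℂ) • K j) = G j)
    (hKspec : ∀ j, spectrum ℂ (K j) = {μ j})
    (hμre : ∀ j, (μ j).re ∈ Set.Ico (0 : ℝ) 1) :
    (∃ m : ℕ, (∑ j, μ j) = (m : ℂ)) ∧
      (∑ j, μ j) • (1 : Matrix (Fin r) (Fin r) ℂ) - ∑ j, K j = 0 := by
  rcases Nat.eq_zero_or_pos r with hr0 | hr
  · subst hr0
    constructor
    · rcases Nat.eq_zero_or_pos n with hn0 | hn
      · subst hn0
        exact ⟨0, by simp⟩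
      · exfalso
        have hmem : ρ ⟨0, hn⟩ ∈ spectrum ℂ (G ⟨0, hn⟩) := by
          rw [hGspec]; exact Set.mem_singleton _
        exact (spectrum.mem_iff.mp hmem) (isUnit_of_subsingleton _)
    · exact Subsingleton.elim _ _
  set c : ℂ := 2 * ↑Real.pi * Complex.I with hc
  have hc0 : c ≠ 0 := Complex.two_pi_I_ne_zero
  set N : Fin n → Matrix (Fin r) (Fin r) ℂ := fun j => K j - μ j • 1 with hN
  have hNnil : ∀ j, IsNilpotent (N j) := fun j => ⟨r, pow_card_eq_zero (hKspec j)⟩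
  have hKj : ∀ j, c • K j = (c * μ j) • (1 : Matrix (Fin r) (Fin r) ℂ) + c • N j := by
    intro j
    simp only [hN, smul_sub, smul_smul]
    abel
  have hscal : ∀ (z : ℂ) (X : Matrix (Fin r) (Fin r) ℂ), Commute (z • (1 : Matrix (Fin r) (Fin r) ℂ)) X :=
    fun z X => (Commute.one_left X).smul_left z
  have hV : ∀ j, NormedSpace.exp (c • N j) = Complex.exp (-(c * μ j)) • G j := by
    intro j
    have h1 : NormedSpace.exp (c • K j)
        = Complex.exp (c * μ j) • NormedSpace.exp (c • N j) := by
      rw [hKj j, Matrix.exp_add_of_commute _ _ (hscal _ _), exp_smul_one,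
        smul_mul_assoc, one_mul]
    rw [hK j] at h1
    rw [h1, smul_smul, ← Complex.exp_add, neg_add_cancel, Complex.exp_zero, one_smul]
  have hGN : ∀ k j, Commute (G k) (c • N j) := by
    intro k j
    apply commute_of_commute_exp ((hNnil j).smul c)
    rw [hV j]
    exact Commute.smul_right (hcomm k j) _
  have hNN : ∀ j k, Commute (c • N j) (c • N k) := by
    intro j k
    apply commute_of_commute_exp ((hNnil k).smul c)
    rw [hV k]
    exact ((hGN k j).symm).smul_right _
  have hKK : ∀ j k, Commute (c • K j) (c • K k) := by
    intro j k
    rw [hKj j, hKj k]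
    apply Commute.add_left
    · exact hscal _ _
    · apply Commute.add_right
      · exact (hscal _ _).symm
      · exact hNN j k
  have hexp1 : NormedSpace.exp (∑ j, c • K j) = 1 := by
    rw [← list_prod_exp _ hKK]
    have : (fun j => NormedSpace.exp (c • K j)) = G := funext hK
    rw [this, hprod]
  set ξ : ℂ := ∑ j, μ j with hξdef
  have hsum : ∑ j, c • K j = (c * ξ) • (1 : Matrix (Fin r) (Fin r) ℂ) + ∑ j, c • N j := by
    calc ∑ j, c • K j = ∑ j, ((c * μ j) • (1 : Matrix (Fin r) (Fin r) ℂ) + c • N j) :=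
          Finset.sum_congr rfl (fun j _ => hKj j)
      _ = (∑ j, (c * μ j)) • (1 : Matrix (Fin r) (Fin r) ℂ) + ∑ j, c • N j := by
          rw [Finset.sum_add_distrib, Finset.sum_smul]
      _ = (c * ξ) • (1 : Matrix (Fin r) (Fin r) ℂ) + ∑ j, c • N j := by
          rw [hξdef, Finset.mul_sum]
  set S : Matrix (Fin r) (Fin r) ℂ := ∑ j, c • N j with hSdef
  have hSnil : IsNilpotent S :=
    Commute.isNilpotent_sum (fun j _ => (hNnil j).smul c) (fun j k _ _ => hNN j k)
  have hsplit2 : Complex.exp (c * ξ) • NormedSpace.exp S = 1 := by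
    have h1 := hexp1
    rw [hsum, Matrix.exp_add_of_commute _ _ (hscal _ _), exp_smul_one,
      smul_mul_assoc, one_mul] at h1
    exact h1
  obtain ⟨ms, hms0⟩ := hSnil
  have hmS : S ^ (ms + 2) = 0 := by rw [pow_add, hms0, zero_mul]
  have hSnil' : IsNilpotent S := ⟨ms + 2, hmS⟩
  have hpowS : ∀ {a : ℕ}, ms + 2 ≤ a → S ^ a = 0 := by
    intro a ha
    rw [← Nat.sub_add_cancel ha, pow_add, hmS, mul_zero]
  have hTnil : IsNilpotent (NormedSpace.exp S - 1) := by
    rw [exp_eq_sum_of_pow_eq_zero hmS]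
    have hT : ∑ k ∈ Finset.range (ms + 2), ((Nat.factorial k : ℕ) : ℂ)⁻¹ • S ^ k - 1
        = ∑ k ∈ Finset.Ico 1 (ms + 2), ((Nat.factorial k : ℕ) : ℂ)⁻¹ • S ^ k := by
      rw [Finset.range_eq_Ico, ← Finset.sum_Ico_consecutive _ (Nat.zero_le 1) (by omega)]
      rw [← Finset.range_eq_Ico, Finset.sum_range_one]
      simp [add_sub_cancel_left]
    rw [hT]
    apply Commute.isNilpotent_sum
    · intro k hk
      have hk1 : 1 ≤ k := (Finset.mem_Ico.mp hk).1
      apply IsNilpotent.smul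
      refine ⟨ms + 2, ?_⟩
      rw [← pow_mul]
      refine hpowS ?_
      calc ms + 2 = 1 * (ms + 2) := (one_mul _).symm
        _ ≤ k * (ms + 2) := Nat.mul_le_mul_right _ hk1
    · intro j k _ _
      exact (((Commute.refl S).pow_pow j k).smul_left _).smul_right _
  have hscalnil : IsNilpotent ((Complex.exp (c * ξ) - 1) • (1 : Matrix (Fin r) (Fin r) ℂ)) := by
    have heq : (Complex.exp (c * ξ) - 1) • (1 : Matrix (Fin r) (Fin r) ℂ)
        = -(Complex.exp (c * ξ) • (NormedSpace.exp S - 1)) := by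
      rw [smul_sub, hsplit2, sub_smul, one_smul, neg_sub]
    rw [heq]
    exact ((hTnil.smul _)).neg
  have hexpxi : Complex.exp (c * ξ) = 1 := by
    have := smul_one_eq_zero hr hscalnil
    exact sub_eq_zero.mp this
  have hexpS1 : NormedSpace.exp S = 1 := by
    rw [hexpxi, one_smul] at hsplit2
    exact hsplit2
  have hS0 : S = 0 := eq_zero_of_exp_eq_one hSnil' hexpS1
  have hNsum : ∑ j, N j = 0 := by
    have hcs : c • ∑ j, N j = 0 := by
      rw [Finset.smul_sum]
      exact hS0
    rcases smul_eq_zero.mp hcs with h | h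
    · exact absurd h hc0
    · exact h
  obtain ⟨kz, hkz⟩ := Complex.exp_eq_one_iff.mp hexpxi
  have hξz : ξ = (kz : ℂ) := by
    apply mul_left_cancel₀ hc0
    rw [hkz, mul_comm]
  have hre : 0 ≤ ξ.re := by
    rw [hξdef, Complex.re_sum]
    exact Finset.sum_nonneg fun j _ => (hμre j).1
  have hkz0 : 0 ≤ kz := by
    have h1 : ((kz : ℝ)) = ξ.re := by rw [hξz]; simp
    have h2 : (0 : ℝ) ≤ (kz : ℝ) := h1 ▸ hre
    exact_mod_cast h2
  constructor
  · refine ⟨kz.toNat, ?_⟩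
    rw [hξz]
    norm_cast
    omega
  · have hKsum : ∑ j, K j = ξ • (1 : Matrix (Fin r) (Fin r) ℂ) + ∑ j, N j := by
      calc ∑ j, K j = ∑ j, (μ j • (1 : Matrix (Fin r) (Fin r) ℂ) + N j) := by
            refine Finset.sum_congr rfl fun j _ => ?_
            simp only [hN]
            abel
        _ = (∑ j, μ j) • (1 : Matrix (Fin r) (Fin r) ℂ) + ∑ j, N j := by
            rw [Finset.sum_add_distrib, Finset.sum_smul]
    rw [hKsum, hNsum, add_zero, sub_self]
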